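/- Let n be a positive integer, R an n×n Hermitian positive semidefinite complex matrix with R ≠ 0, and α > 0, c > 0 real numbers. For δ ≥ 0 define f(δ) = (1/n)·tr(R·((c/(1+δ))·R + α·I_n)⁻¹), where the matrix (c/(1+δ))·R + α·I_n is positive definite, hence invertible. Then for every δ ≥ 0 and every λ > 1, f(λ·δ) < λ·f(δ). -/

import Mathlib

open Matrix ComplexOrder

lemma trace_re_eq (n : ℕ) (R : Matrix (Fin n) (Fin n) ℂ) (hR : R.PosSemidef)
    (α t : ℝ) (hα : 0 < α) (ht : 0 ≤ t) :
    ((R * (t • R + α • (1 : Matrix (Fin n) (Fin n) ℂ))⁻¹).trace).re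
      = ∑ i, hR.1.eigenvalues i / (t * hR.1.eigenvalues i + α) := by
  classical
  set hH := hR.1
  set U : Matrix (Fin n) (Fin n) ℂ := (hH.eigenvectorUnitary : Matrix (Fin n) (Fin n) ℂ)
  have hUU : U * star U = 1 := (Matrix.mem_unitaryGroup_iff).mp hH.eigenvectorUnitary.2
  have hUU' : star U * U = 1 := (Matrix.mem_unitaryGroup_iff').mp hH.eigenvectorUnitary.2
  set μ := hH.eigenvalues
  have hμ : ∀ i, 0 ≤ μ i := hR.eigenvalues_nonneg
  have hd : ∀ i, t * μ i + α ≠ 0 := fun i => ne_of_gt (by nlinarith [hμ i])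
  set D : Matrix (Fin n) (Fin n) ℂ := diagonal (RCLike.ofReal ∘ μ)
  have hspec : R = U * D * star U := hH.spectral_theorem
  set C : Matrix (Fin n) (Fin n) ℂ := diagonal (fun i => ((t * μ i + α : ℝ) : ℂ))
  have hkey : ∀ M N : Matrix (Fin n) (Fin n) ℂ,
      (U * M * star U) * (U * N * star U) = U * (M * N) * star U := by
    intro M N
    simp only [mul_assoc]
    rw [← mul_assoc (star U) U, hUU', one_mul]
  have hC : t • R + α • (1 : Matrix (Fin n) (Fin n) ℂ) = U * C * star U := by
    rw [hspec]
    have h1 : (1 : Matrix (Fin n) (Fin n) ℂ) = U * 1 * star U := by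
      rw [mul_one, hUU]
    rw [h1]
    rw [← Matrix.smul_mul, ← Matrix.mul_smul, ← Matrix.smul_mul, ← Matrix.mul_smul,
      ← Matrix.add_mul, ← Matrix.mul_add]
    congr 1
    congr 1
    ext i j
    by_cases h : i = j <;>
      simp [C, D, Matrix.diagonal_apply, Matrix.one_apply, h, Complex.ext_iff]
  set E : Matrix (Fin n) (Fin n) ℂ := diagonal (fun i => (((t * μ i + α : ℝ) : ℂ))⁻¹)
  have hCE : C * E = 1 := by
    rw [Matrix.diagonal_mul_diagonal]
    convert Matrix.diagonal_one using 2
    funext i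
    rw [mul_inv_cancel₀ (by exact_mod_cast hd i)]
  have hCinv : C⁻¹ = E := Matrix.inv_eq_right_inv hCE
  have hAinv : (U * C * star U)⁻¹ = U * E * star U := by
    apply Matrix.inv_eq_right_inv
    rw [hkey, hCE, mul_one, hUU]
  rw [hC, hAinv, hspec, hkey, Matrix.trace_mul_cycle, ← mul_assoc, hUU', one_mul,
    Matrix.diagonal_mul_diagonal, Matrix.trace_diagonal, Complex.re_sum]
  congr 1
  funext i
  rw [show (RCLike.ofReal ∘ μ) i = ((μ i : ℝ) : ℂ) from rfl, ← Complex.ofReal_inv,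
    ← Complex.ofReal_mul, Complex.ofReal_re, div_eq_mul_inv]

/-- Strict scalability of the fixed-point map: for R Hermitian PSD, R ≠ 0,
α, c > 0, the map f(δ) = (1/n)·tr(R·((c/(1+δ))·R + α·I)⁻¹) satisfies
f(λ·δ) < λ·f(δ) for all δ ≥ 0 and λ > 1. -/
theorem stmt_11 (n : ℕ) (hn : 0 < n) (R : Matrix (Fin n) (Fin n) ℂ)
    (hR : R.PosSemidef) (hR0 : R ≠ 0) (α c : ℝ) (hα : 0 < α) (hc : 0 < c) :
    ∀ δ : ℝ, 0 ≤ δ → ∀ lam : ℝ, 1 < lam →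
      (1 / (n : ℝ)) *
          ((R * ((c / (1 + lam * δ)) • R + α • (1 : Matrix (Fin n) (Fin n) ℂ))⁻¹).trace).re
        < lam * ((1 / (n : ℝ)) *
            ((R * ((c / (1 + δ)) • R + α • (1 : Matrix (Fin n) (Fin n) ℂ))⁻¹).trace).re) := by
  intro δ hδ lam hlam
  classical
  set μ := hR.1.eigenvalues with hμdef
  have hμ : ∀ i, 0 ≤ μ i := hR.eigenvalues_nonneg
  -- some eigenvalue is positive
  have hex : ∃ i, 0 < μ i := by
    by_contra h
    push_neg at h
    have hz : ∀ i, μ i = 0 := fun i => le_antisymm (h i) (hμ i)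
    apply hR0
    have hspec := hR.1.spectral_theorem
    rw [hspec]
    have : diagonal (RCLike.ofReal ∘ μ) = (0 : Matrix (Fin n) (Fin n) ℂ) := by
      ext i j
      by_cases hij : i = j <;> simp [Matrix.diagonal_apply, hij, hz]
    rw [this, map_zero]
  obtain ⟨i₀, hi₀⟩ := hex
  have h1δ : (0:ℝ) < 1 + δ := by linarith
  have h1lδ : (0:ℝ) < 1 + lam * δ := by nlinarith
  set t : ℝ := c / (1 + δ) with htdef
  set t' : ℝ := c / (1 + lam * δ) with ht'def
  have ht : 0 < t := div_pos hc h1δ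
  have ht' : 0 < t' := div_pos hc h1lδ
  have hle : t ≤ lam * t' := by
    rw [htdef, ht'def, mul_div_assoc', div_le_div_iff₀ h1δ h1lδ]
    nlinarith
  rw [trace_re_eq n R hR α t' hα ht'.le, trace_re_eq n R hR α t hα ht.le]
  have hdpos : ∀ s : ℝ, 0 < s → ∀ i, 0 < s * μ i + α := by
    intro s hs i; nlinarith [hμ i]
  have hsum : ∑ i, μ i / (t' * μ i + α) < lam * ∑ i, μ i / (t * μ i + α) := by
    rw [Finset.mul_sum]
    apply Finset.sum_lt_sum
    · intro i _
      rw [div_le_iff₀ (hdpos t' ht' i)]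
      have h2 : lam * (μ i / (t * μ i + α)) * (t' * μ i + α)
          = (lam * μ i * (t' * μ i + α)) / (t * μ i + α) := by ring
      rw [h2, le_div_iff₀ (hdpos t ht i)]
      nlinarith [mul_nonneg (sub_nonneg.mpr hle) (mul_nonneg (hμ i) (hμ i)), hμ i,
        mul_nonneg (mul_nonneg hα.le (hμ i)) (sub_nonneg.mpr hlam.le)]
    · exact ⟨i₀, Finset.mem_univ i₀, by
        rw [div_lt_iff₀ (hdpos t' ht' i₀)]
        have h2 : lam * (μ i₀ / (t * μ i₀ + α)) * (t' * μ i₀ + α)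
            = (lam * μ i₀ * (t' * μ i₀ + α)) / (t * μ i₀ + α) := by ring
        rw [h2, lt_div_iff₀ (hdpos t ht i₀)]
        nlinarith [mul_nonneg (sub_nonneg.mpr hle) (mul_nonneg (hμ i₀) (hμ i₀)),
          mul_pos (mul_pos hα hi₀) (sub_pos.mpr hlam)]⟩
  have hn' : (0:ℝ) < 1 / n := by positivity
  calc (1 / (n:ℝ)) * ∑ i, μ i / (t' * μ i + α)
      < (1 / (n:ℝ)) * (lam * ∑ i, μ i / (t * μ i + α)) := by
        exact mul_lt_mul_of_pos_left hsum hn'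
    _ = lam * ((1 / (n:ℝ)) * ∑ i, μ i / (t * μ i + α)) := by ring
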